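/- Let d ≥ 1 and let X be a subset of the Euclidean space ℝ^d, equipped with the induced metric. Let g ≥ 0, α ≥ 0, C > 1 and 0 < ε₀ < 1. Assume: (i) 0 < H^g(X) < ∞; (ii) for every ε > 0 and all x, y ∈ X there is a bijective isometry from X ∩ B(x,ε) onto X ∩ B(y,ε), where B(x,ε) denotes the open ball of radius ε; (iii) for every ε with 0 < ε < ε₀ there exists a finite 2ε-separated subset of X of cardinality strictly greater than C·ε^{−α}. Then for every Borel set E ⊆ X and every countable cover (θ_j)_{j∈ℕ} of E by sets with diam θ_j ≤ ε₀ for all j, one has Σ_j (diam θ_j)^α ≥ C · H^g(E) / H^g(X). -/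

import Mathlib

open MeasureTheory Metric Set ENNReal

lemma hull_inter {β : Type*} [MeasurableSpace β] (μ : Measure β) (X : Set β)
    (hfin : μ X ≠ ⊤) {M : Set β} (hM : MeasurableSet M) :
    μ (toMeasurable μ X ∩ M) = μ (X ∩ M) := by
  apply le_antisymm
  · set Y := toMeasurable μ (X ∩ M) with hY
    have hYm : MeasurableSet Y := measurableSet_toMeasurable _ _
    have hXY : X ∩ M ⊆ Y := subset_toMeasurable _ _
    set Z := (toMeasurable μ X ∩ M) \ Y with hZ
    have hZm : MeasurableSet Z := ((measurableSet_toMeasurable _ _).inter hM).diff hYm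
    have hZsub : Z ⊆ toMeasurable μ X := fun z hz => hz.1.1
    have hXsub : X ⊆ toMeasurable μ X \ Z := by
      intro x hxX
      refine ⟨subset_toMeasurable _ _ hxX, fun hxZ => hxZ.2 (hXY ⟨hxX, hxZ.1.2⟩)⟩
    have hZfin : μ Z ≠ ⊤ := by
      refine ne_top_of_le_ne_top ?_ (measure_mono hZsub)
      rwa [measure_toMeasurable]
    have hμZ : μ Z = 0 := by
      have h1 : μ X ≤ μ (toMeasurable μ X) - μ Z :=
        (measure_mono hXsub).trans_eq (measure_diff hZsub hZm.nullMeasurableSet hZfin)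
      rw [measure_toMeasurable] at h1
      have h2 : μ X + μ Z ≤ μ X := by
        calc μ X + μ Z ≤ (μ X - μ Z) + μ Z := by gcongr
        _ = μ X := tsub_add_cancel_of_le (le_trans (measure_mono (fun z hz => (hZsub hz))) (le_of_eq (measure_toMeasurable X)))
      have h3 : μ X + μ Z ≤ μ X + 0 := by simpa using h2
      have := (ENNReal.add_le_add_iff_left hfin).mp h3
      simpa using this
    calc μ (toMeasurable μ X ∩ M) ≤ μ ((toMeasurable μ X ∩ M ∩ Y) ∪ Z) := by
          apply measure_mono; intro z hz
          by_cases hzY : z ∈ Y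
          · exact Or.inl ⟨hz, hzY⟩
          · exact Or.inr ⟨hz, hzY⟩
    _ ≤ μ (toMeasurable μ X ∩ M ∩ Y) + μ Z := measure_union_le _ _
    _ ≤ μ Y + 0 := by gcongr; exact inter_subset_right; exact le_of_eq hμZ
    _ = μ (X ∩ M) := by rw [add_zero, hY, measure_toMeasurable]
  · exact measure_mono (inter_subset_inter_left M (subset_toMeasurable μ X))

variable {γ : Type*} [MetricSpace γ] [MeasurableSpace γ] [BorelSpace γ]

lemma iso_measure {g : ℝ} (hg : 0 ≤ g) {A B : Set γ} (e : A ≃ᵢ B) : μH[g] A = μH[g] B := by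
  have hcoeA : Isometry ((↑) : A → γ) := isometry_subtype_coe
  have hcoeB : Isometry ((↑) : B → γ) := isometry_subtype_coe
  have hA : μH[g] (Set.univ : Set A) = μH[g] A := by
    have := hcoeA.hausdorffMeasure_image (Or.inl hg) Set.univ
    rw [Set.image_univ, Subtype.range_coe] at this
    exact this.symm
  have hB : μH[g] (Set.univ : Set B) = μH[g] B := by
    have := hcoeB.hausdorffMeasure_image (Or.inl hg) Set.univ
    rw [Set.image_univ, Subtype.range_coe] at this
    exact this.symm
  have hf : Isometry (((↑) : B → γ) ∘ e) := hcoeB.comp e.isometry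
  have hAB : μH[g] ((((↑) : B → γ) ∘ e) '' Set.univ) = μH[g] (Set.univ : Set A) :=
    hf.hausdorffMeasure_image (Or.inl hg) Set.univ
  rw [Set.image_comp, Set.image_univ, e.range_eq_univ, Set.image_univ, Subtype.range_coe] at hAB
  exact hA.symm.trans hAB.symm

-- image of a subset under the isometry, as ambient sets
lemma iso_measure_subset {g : ℝ} (hg : 0 ≤ g) {A B : Set γ} (e : A ≃ᵢ B) {S : Set γ}
    (hS : S ⊆ A) :
    μH[g] ((((↑) : B → γ) ∘ e) '' (((↑) : A → γ) ⁻¹' S)) = μH[g] S := by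
  have hcoeA : Isometry ((↑) : A → γ) := isometry_subtype_coe
  have hcoeB : Isometry ((↑) : B → γ) := isometry_subtype_coe
  have hf : Isometry (((↑) : B → γ) ∘ e) := hcoeB.comp e.isometry
  have h1 : μH[g] ((((↑) : B → γ) ∘ e) '' (((↑) : A → γ) ⁻¹' S))
      = μH[g] (((↑) : A → γ) ⁻¹' S) := hf.hausdorffMeasure_image (Or.inl hg) _
  have h2 : μH[g] (((↑) : A → γ) '' (((↑) : A → γ) ⁻¹' S)) = μH[g] (((↑) : A → γ) ⁻¹' S) :=
    hcoeA.hausdorffMeasure_image (Or.inl hg) _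
  rw [Subtype.image_preimage_coe, inter_eq_self_of_subset_right hS] at h2
  rw [h1, ← h2]

lemma lens_geom {E : Type*} [NormedAddCommGroup E] [InnerProductSpace ℝ E]
    {t t' z : E} {R₀ ε ρ : ℝ}
    (hρ0 : 0 ≤ ρ) (hρsq : ρ^2 = R₀^2 - ε^2) (hε0 : 0 < ε)
    (hzt : dist z t < R₀) (hzt' : dist z t' < R₀) (hsep : 2*ε ≤ dist t t') :
    dist z ((2:ℝ)⁻¹ • (t + t')) < ρ := by
  rw [dist_eq_norm]
  have hzc : z - (2:ℝ)⁻¹ • (t + t') = (2:ℝ)⁻¹ • ((z - t) + (z - t')) := by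
    module
  rw [hzc, norm_smul]
  have h15 : ‖(2:ℝ)⁻¹‖ = (2:ℝ)⁻¹ := by rw [Real.norm_eq_abs]; norm_num
  rw [h15]
  have hP := parallelogram_law_with_norm ℝ (z - t) (z - t')
  have huv : (z - t) - (z - t') = t' - t := by abel
  have h11 : ‖z - t‖ < R₀ := by rw [← dist_eq_norm]; exact hzt
  have h12 : ‖z - t'‖ < R₀ := by rw [← dist_eq_norm]; exact hzt'
  have h13 : 2*ε ≤ ‖(z - t) - (z - t')‖ := by
    rw [huv, ← dist_eq_norm, dist_comm]; exact hsep
  have ha : ‖z - t‖ * ‖z - t‖ < R₀ * R₀ :=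
    mul_lt_mul'' h11 h11 (norm_nonneg _) (norm_nonneg _)
  have hb : ‖z - t'‖ * ‖z - t'‖ < R₀ * R₀ :=
    mul_lt_mul'' h12 h12 (norm_nonneg _) (norm_nonneg _)
  have hcc : (2*ε) * (2*ε) ≤ ‖(z - t) - (z - t')‖ * ‖(z - t) - (z - t')‖ :=
    mul_le_mul h13 h13 (by linarith) (norm_nonneg _)
  have h14 : ‖(z - t) + (z - t')‖ * ‖(z - t) + (z - t')‖ < 4*(ρ*ρ) := by
    have hρsq' : ρ * ρ = R₀*R₀ - ε*ε := by nlinarith [hρsq]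
    rw [hρsq']
    nlinarith [hP]
  have hN0 : 0 ≤ ‖(z - t) + (z - t')‖ := norm_nonneg _
  nlinarith [sq_nonneg (‖(z - t) + (z - t')‖ - 2*ρ), hρ0, hN0, h14]

section main

variable {d : ℕ} {X : Set (EuclideanSpace ℝ (Fin d))} {g α C ε₀ : ℝ}

lemma ball_bound (hg : 0 ≤ g) (hXtop : μH[g] X < ⊤)
    (hiso : ∀ ε : ℝ, 0 < ε → ∀ x ∈ X, ∀ y ∈ X,
      Nonempty ((X ∩ ball x ε : Set (EuclideanSpace ℝ (Fin d))) ≃ᵢ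
                (X ∩ ball y ε : Set (EuclideanSpace ℝ (Fin d)))))
    (hpack : ∀ ε : ℝ, 0 < ε → ε < ε₀ →
      ∃ T : Finset (EuclideanSpace ℝ (Fin d)), ↑T ⊆ X ∧
        (∀ x ∈ T, ∀ y ∈ T, x ≠ y → 2 * ε ≤ dist x y) ∧
        C * ε ^ (-α) < (T.card : ℝ))
    {s : ℝ} (hs : 0 < s) (hsε₀ : s < ε₀) {w : EuclideanSpace ℝ (Fin d)} (hw : w ∈ X) :
    ENNReal.ofReal (C * s ^ (-α)) * μH[g] (X ∩ ball w s) ≤ μH[g] X := by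
  classical
  set μ := (μH[g] : Measure (EuclideanSpace ℝ (Fin d)))
  obtain ⟨T, hTX, hTsep, hTcard⟩ := hpack s hs hsε₀
  set X' := toMeasurable μ X with hX'
  have hdisj : (T : Set (EuclideanSpace ℝ (Fin d))).PairwiseDisjoint
      (fun t => X' ∩ ball t s) := by
    intro t ht t' ht' hne
    refine Set.disjoint_left.2 fun z hz hz' => ?_
    have h2s := hTsep t ht t' ht' hne
    have : dist t t' < 2 * s := by
      calc dist t t' ≤ dist z t + dist z t' := dist_triangle_left t t' z
      _ < s + s := add_lt_add hz.2 hz'.2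
      _ = 2 * s := by ring
    linarith
  have hmeas : ∀ t ∈ T, MeasurableSet (X' ∩ ball t s) :=
    fun t _ => (measurableSet_toMeasurable _ _).inter measurableSet_ball
  have hsum : ∑ t ∈ T, μ (X' ∩ ball t s) ≤ μ X := by
    rw [← measure_biUnion_finset hdisj hmeas]
    calc μ (⋃ t ∈ T, X' ∩ ball t s) ≤ μ X' := by
          apply measure_mono
          simp only [Set.iUnion_subset_iff]
          exact fun t _ => Set.inter_subset_left
    _ = μ X := measure_toMeasurable X
  have hterm : ∀ t ∈ T, μ (X' ∩ ball t s) = μ (X ∩ ball w s) := by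
    intro t ht
    rw [hull_inter μ X hXtop.ne measurableSet_ball]
    exact iso_measure hg (hiso s hs t (hTX ht) w hw).some
  have hsum2 : (T.card : ℝ≥0∞) * μ (X ∩ ball w s) ≤ μ X := by
    have h1 : (T.card : ℝ≥0∞) * μ (X ∩ ball w s) = ∑ _t ∈ T, μ (X ∩ ball w s) := by
      rw [Finset.sum_const, nsmul_eq_mul]
    rw [h1]
    calc ∑ _t ∈ T, μ (X ∩ ball w s)
        = ∑ t ∈ T, μ (X' ∩ ball t s) := Finset.sum_congr rfl fun t ht => (hterm t ht).symm
    _ ≤ μ X := hsum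
  refine le_trans (_root_.mul_le_mul_left ?_ _) hsum2
  calc ENNReal.ofReal (C * s ^ (-α)) ≤ ENNReal.ofReal (T.card : ℝ) :=
        ENNReal.ofReal_le_ofReal hTcard.le
  _ = (T.card : ℝ≥0∞) := ENNReal.ofReal_natCast T.card

lemma mball (hg : 0 ≤ g) (hα : 0 ≤ α) (hC : 1 < C) (hXtop : μH[g] X < ⊤)
    (hiso : ∀ ε : ℝ, 0 < ε → ∀ x ∈ X, ∀ y ∈ X,
      Nonempty ((X ∩ ball x ε : Set (EuclideanSpace ℝ (Fin d))) ≃ᵢ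
                (X ∩ ball y ε : Set (EuclideanSpace ℝ (Fin d)))))
    (hpack : ∀ ε : ℝ, 0 < ε → ε < ε₀ →
      ∃ T : Finset (EuclideanSpace ℝ (Fin d)), ↑T ⊆ X ∧
        (∀ x ∈ T, ∀ y ∈ T, x ≠ y → 2 * ε ≤ dist x y) ∧
        C * ε ^ (-α) < (T.card : ℝ))
    {s : ℝ} (hs : 0 < s) (hsε₀ : s < ε₀) {w : EuclideanSpace ℝ (Fin d)} (hw : w ∈ X) :
    μH[g] (X ∩ ball w s) ≤ μH[g] X * ENNReal.ofReal (s ^ α) := by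
  have h1 := ball_bound hg hXtop hiso hpack hs hsε₀ hw
  have hC0 : (0:ℝ) < C := lt_trans one_pos hC
  have hone : s ^ α / C * (C * s ^ (-α)) = 1 := by
    field_simp
    rw [← Real.rpow_add hs]
    simp
  calc μH[g] (X ∩ ball w s)
      = ENNReal.ofReal (s ^ α / C) * (ENNReal.ofReal (C * s ^ (-α)) * μH[g] (X ∩ ball w s)) := by
        rw [← mul_assoc, ← ENNReal.ofReal_mul (by positivity), hone]
        simp
  _ ≤ ENNReal.ofReal (s ^ α / C) * μH[g] X := _root_.mul_le_mul_right h1 _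
  _ ≤ ENNReal.ofReal (s ^ α) * μH[g] X := by
        gcongr
        exact div_le_self (Real.rpow_nonneg hs.le α) hC.le
  _ = μH[g] X * ENNReal.ofReal (s ^ α) := mul_comm _ _

set_option maxHeartbeats 1000000 in
lemma key_lemma (hg : 0 ≤ g) (hα : 0 < α) (hC : 1 < C) (hε₀1 : ε₀ < 1)
    (hXtop : μH[g] X < ⊤)
    (hiso : ∀ ε : ℝ, 0 < ε → ∀ x ∈ X, ∀ y ∈ X,
      Nonempty ((X ∩ ball x ε : Set (EuclideanSpace ℝ (Fin d))) ≃ᵢ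
                (X ∩ ball y ε : Set (EuclideanSpace ℝ (Fin d)))))
    (hpack : ∀ ε : ℝ, 0 < ε → ε < ε₀ →
      ∃ T : Finset (EuclideanSpace ℝ (Fin d)), ↑T ⊆ X ∧
        (∀ x ∈ T, ∀ y ∈ T, x ≠ y → 2 * ε ≤ dist x y) ∧
        C * ε ^ (-α) < (T.card : ℝ))
    {r : ℝ} (hr : 0 < r) (hrε₀ : r ≤ ε₀) {S : Set (EuclideanSpace ℝ (Fin d))}
    (hSX : S ⊆ X) (hSdiam : EMetric.diam S ≤ ENNReal.ofReal r) :
    ENNReal.ofReal (C * r ^ (-α)) * μH[g] S ≤ μH[g] X := by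
  classical
  set μ := (μH[g] : Measure (EuclideanSpace ℝ (Fin d))) with hμ
  rcases S.eq_empty_or_nonempty with hS | ⟨x, hxS⟩
  · simp [hS]
  have hε₀ : 0 < ε₀ := lt_of_lt_of_le hr hrε₀
  have hxX : x ∈ X := hSX hxS
  set n₀ : ℕ := ⌊C * r ^ (-α)⌋₊ + 1 with hn₀
  have hCr0 : 0 < C * r ^ (-α) := by positivity
  have hn₀R : C * r ^ (-α) < (n₀ : ℝ) := by
    rw [hn₀]; push_cast; exact Nat.lt_floor_add_one _
  have hmain : (n₀ : ℝ≥0∞) * μ S ≤ μ X := by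
    apply ENNReal.le_of_forall_pos_le_add
    intro κ hκ _
    have hκ0 : (0:ℝ) < (κ:ℝ) := hκ
    set Mr := (μ X).toReal with hMr
    have hMr0 : 0 ≤ Mr := ENNReal.toReal_nonneg
    set Q : ℝ := (n₀:ℝ)^2 * (Mr + 1) with hQ
    have hn₀0 : (0:ℝ) < (n₀:ℝ) := by positivity
    have hQ0 : 0 < Q := by positivity
    set s' : ℝ := min (min (ε₀/2) (r/2)) (((κ:ℝ)/Q) ^ α⁻¹) with hs'
    have hs'0 : 0 < s' := by
      apply lt_min (lt_min (by linarith) (by linarith))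
      positivity
    have hs'ε₀ : s' < ε₀ :=
      lt_of_le_of_lt (le_trans (min_le_left _ _) (min_le_left _ _)) (by linarith)
    have hs'r : s' ≤ r/2 := le_trans (min_le_left _ _) (min_le_right _ _)
    have hs'1 : s' < 1 := lt_trans hs'ε₀ hε₀1
    have herr : (n₀:ℝ≥0∞) * ((n₀:ℝ≥0∞) * (μ X * ENNReal.ofReal (s' ^ α))) ≤ (κ:ℝ≥0∞) := by
      have h1 : s' ^ α ≤ (κ:ℝ)/Q := by
        have h1a : (((κ:ℝ)/Q) ^ α⁻¹) ^ α = (κ:ℝ)/Q := by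
          rw [← Real.rpow_mul (by positivity), inv_mul_cancel₀ (ne_of_gt hα), Real.rpow_one]
        rw [← h1a]
        exact Real.rpow_le_rpow hs'0.le (min_le_right _ _) hα.le
      have h2 : μ X ≤ ENNReal.ofReal Mr := le_of_eq (ENNReal.ofReal_toReal hXtop.ne).symm
      have h3 : (n₀:ℝ) * ((n₀:ℝ) * (Mr * ((κ:ℝ)/Q))) ≤ (κ:ℝ) := by
        have h3a : (n₀:ℝ) * ((n₀:ℝ) * (Mr * ((κ:ℝ)/Q))) = (κ:ℝ) * (Mr/(Mr+1)) := by
          rw [hQ]; field_simp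
        rw [h3a]
        have h3b : Mr/(Mr+1) ≤ 1 := by
          rw [div_le_one (by linarith)]; linarith
        nlinarith
      calc (n₀:ℝ≥0∞) * ((n₀:ℝ≥0∞) * (μ X * ENNReal.ofReal (s' ^ α)))
          ≤ (n₀:ℝ≥0∞) * ((n₀:ℝ≥0∞) * (ENNReal.ofReal Mr * ENNReal.ofReal (s' ^ α))) := by
            gcongr
      _ = ENNReal.ofReal ((n₀:ℝ) * ((n₀:ℝ) * (Mr * s' ^ α))) := by
            rw [← ENNReal.ofReal_mul hMr0, ← ENNReal.ofReal_natCast n₀,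
              ← ENNReal.ofReal_mul (by positivity), ← ENNReal.ofReal_mul (by positivity)]
      _ ≤ ENNReal.ofReal (κ:ℝ) := by
            apply ENNReal.ofReal_le_ofReal
            calc (n₀:ℝ) * ((n₀:ℝ) * (Mr * s' ^ α)) ≤ (n₀:ℝ) * ((n₀:ℝ) * (Mr * ((κ:ℝ)/Q))) := by
                  gcongr
            _ ≤ (κ:ℝ) := h3
      _ = (κ:ℝ≥0∞) := ENNReal.ofReal_coe_nnreal
    set ζ : ℝ := (s'/5)^2 with hζ
    have hζ0 : 0 < ζ := by positivity
    have hζs' : ζ < s' := by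
      rw [hζ]; nlinarith
    have hζr : ζ < r := by
      have : s' ≤ r/2 := hs'r
      linarith
    set ε : ℝ := r - ζ with hεdef
    have hε0 : 0 < ε := by rw [hεdef]; linarith
    have hεε₀ : ε < ε₀ := by
      rw [hεdef]; linarith
    set R₀ : ℝ := r + ζ with hR₀
    have hR₀0 : 0 < R₀ := by rw [hR₀]; linarith
    set ρ : ℝ := Real.sqrt (R₀^2 - ε^2) with hρ
    have hrle1 : r ≤ 1 := by linarith
    have hρsq : ρ^2 = R₀^2 - ε^2 := by
      rw [hρ]; apply Real.sq_sqrt; nlinarith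
    have hρ0 : 0 ≤ ρ := Real.sqrt_nonneg _
    have hρle : ρ ≤ 2*(s'/5) := by
      rw [hρ]
      calc Real.sqrt (R₀^2 - ε^2) ≤ Real.sqrt ((2*(s'/5))^2) := by
            apply Real.sqrt_le_sqrt; rw [hR₀, hεdef, hζ]; nlinarith
      _ = 2*(s'/5) := Real.sqrt_sq (by positivity)
    have h2ρ : 2*ρ < s' := by linarith
    obtain ⟨T, hTX, hTsep, hTcard⟩ := hpack ε hε0 hεε₀
    have hn₀T : n₀ ≤ T.card := by
      have h7 : C * r ^ (-α) ≤ C * ε ^ (-α) := by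
        apply mul_le_mul_of_nonneg_left _ (le_of_lt (lt_trans one_pos hC))
        exact Real.rpow_le_rpow_of_nonpos hε0 (by rw [hεdef]; linarith) (neg_nonpos.mpr hα.le)
      have h8 : ((⌊C * r ^ (-α)⌋₊ : ℕ) : ℝ) < (T.card : ℝ) :=
        lt_of_le_of_lt (le_trans (Nat.floor_le hCr0.le) h7) hTcard
      have h9 := Nat.cast_lt.mp h8
      omega
    obtain ⟨T', hT'T, hT'card⟩ := Finset.exists_subset_card_eq hn₀T
    have hT'X : ∀ t ∈ T', t ∈ X := fun t ht => hTX (hT'T ht)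
    have hSball : S ⊆ X ∩ ball x R₀ := by
      intro y hy
      refine ⟨hSX hy, ?_⟩
      have h9 : edist y x ≤ ENNReal.ofReal r :=
        le_trans (EMetric.edist_le_diam_of_mem hy hxS) hSdiam
      rw [edist_dist] at h9
      have h10 : dist y x ≤ r := (ENNReal.ofReal_le_ofReal_iff hr.le).mp h9
      rw [mem_ball]
      rw [hR₀]; linarith
    have hcopy : ∀ t ∈ X, ∃ A : Set (EuclideanSpace ℝ (Fin d)),
        A ⊆ X ∩ ball t R₀ ∧ μ A = μ S := by
      intro t ht
      obtain ⟨e⟩ := hiso R₀ hR₀0 x hxX t ht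
      refine ⟨(((↑) : (X ∩ ball t R₀ : Set (EuclideanSpace ℝ (Fin d))) → _) ∘ e) ''
        (((↑) : (X ∩ ball x R₀ : Set (EuclideanSpace ℝ (Fin d))) → _) ⁻¹' S), ?_, ?_⟩
      · rintro _ ⟨z, _, rfl⟩
        exact (e z).2
      · exact iso_measure_subset hg e hSball
    choose! A hAsub hAμ using hcopy
    set X' := toMeasurable μ X with hX'
    have hX'm : MeasurableSet X' := measurableSet_toMeasurable _ _
    set H : EuclideanSpace ℝ (Fin d) → Set (EuclideanSpace ℝ (Fin d)) :=
      fun t => ((toMeasurable μ (A t) ∩ X') ∩ ball t R₀) \ ⋃ t' ∈ T'.erase t, ball t' R₀ with hH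
    have hHm : ∀ t, MeasurableSet (H t) := by
      intro t
      apply (((measurableSet_toMeasurable _ _).inter hX'm).inter measurableSet_ball).diff
      exact (T'.erase t).measurableSet_biUnion fun t' _ => measurableSet_ball
    have hlens : ∀ t ∈ T', ∀ t' ∈ T', t ≠ t' →
        μ (X' ∩ (ball t R₀ ∩ ball t' R₀)) ≤ μ X * ENNReal.ofReal (s' ^ α) := by
      intro t ht t' ht' hne
      have hsep := hTsep t (hT'T ht) t' (hT'T ht') hne
      set c : EuclideanSpace ℝ (Fin d) := (2:ℝ)⁻¹ • (t + t') with hc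
      have hincl : X' ∩ (ball t R₀ ∩ ball t' R₀) ⊆ X' ∩ ball c ρ := by
        rintro z ⟨hzX, hzt, hzt'⟩
        refine ⟨hzX, ?_⟩
        rw [mem_ball]
        exact lens_geom hρ0 hρsq hε0 (mem_ball.mp hzt) (mem_ball.mp hzt') hsep
      calc μ (X' ∩ (ball t R₀ ∩ ball t' R₀)) ≤ μ (X' ∩ ball c ρ) := measure_mono hincl
      _ = μ (X ∩ ball c ρ) := hull_inter μ X hXtop.ne measurableSet_ball
      _ ≤ μ X * ENNReal.ofReal (s' ^ α) := by
          rcases (X ∩ ball c ρ).eq_empty_or_nonempty with hemp | ⟨w, hwX, hwc⟩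
          · simp [hemp]
          · calc μ (X ∩ ball c ρ) ≤ μ (X ∩ ball w s') := by
                  apply measure_mono
                  rintro z ⟨hzX, hzc⟩
                  refine ⟨hzX, ?_⟩
                  rw [mem_ball]
                  have hd1 : dist z c < ρ := mem_ball.mp hzc
                  have hd2 : dist w c < ρ := mem_ball.mp hwc
                  calc dist z w ≤ dist z c + dist c w := dist_triangle z c w
                  _ = dist z c + dist w c := by rw [dist_comm c w]
                  _ < ρ + ρ := add_lt_add hd1 hd2
                  _ ≤ s' := by linarith
            _ ≤ μ X * ENNReal.ofReal (s' ^ α) :=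
                mball hg hα.le hC hXtop hiso hpack hs'0 hs'ε₀ hwX
    have hper : ∀ t ∈ T', μ S ≤ μ (H t) + (n₀:ℝ≥0∞) * (μ X * ENNReal.ofReal (s' ^ α)) := by
      intro t ht
      have htX := hT'X t ht
      have h16 : A t ⊆ (toMeasurable μ (A t) ∩ X') ∩ ball t R₀ := by
        intro z hz
        exact ⟨⟨subset_toMeasurable _ _ hz, subset_toMeasurable _ _ ((hAsub t htX) hz).1⟩,
          ((hAsub t htX) hz).2⟩
      have h17 : (toMeasurable μ (A t) ∩ X') ∩ ball t R₀ ⊆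
          H t ∪ ⋃ t' ∈ T'.erase t, (X' ∩ (ball t R₀ ∩ ball t' R₀)) := by
        intro z hz
        by_cases hzu : z ∈ ⋃ t' ∈ T'.erase t, ball t' R₀
        · right
          simp only [Set.mem_iUnion, exists_prop] at hzu ⊢
          obtain ⟨t', ht', hzt'⟩ := hzu
          exact ⟨t', ht', hz.1.2, hz.2, hzt'⟩
        · left; exact ⟨hz, hzu⟩
      calc μ S = μ (A t) := (hAμ t htX).symm
      _ ≤ μ (H t ∪ ⋃ t' ∈ T'.erase t, (X' ∩ (ball t R₀ ∩ ball t' R₀))) :=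
          measure_mono (h16.trans h17)
      _ ≤ μ (H t) + μ (⋃ t' ∈ T'.erase t, (X' ∩ (ball t R₀ ∩ ball t' R₀))) := measure_union_le _ _
      _ ≤ μ (H t) + ∑ t' ∈ T'.erase t, μ (X' ∩ (ball t R₀ ∩ ball t' R₀)) := by
          gcongr
          exact measure_biUnion_finset_le _ _
      _ ≤ μ (H t) + ∑ _t' ∈ T'.erase t, μ X * ENNReal.ofReal (s' ^ α) := by
          gcongr with t' ht'
          exact hlens t ht t' (Finset.mem_of_mem_erase ht')
            (fun h => (Finset.ne_of_mem_erase ht') h.symm)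
      _ ≤ μ (H t) + (n₀:ℝ≥0∞) * (μ X * ENNReal.ofReal (s' ^ α)) := by
          rw [Finset.sum_const, nsmul_eq_mul]
          gcongr
          have := Finset.card_erase_le (s := T') (a := t)
          exact_mod_cast le_trans this (le_of_eq hT'card)
    have hdisjH : (T' : Set (EuclideanSpace ℝ (Fin d))).PairwiseDisjoint H := by
      intro t ht t' ht' hne
      refine Set.disjoint_left.2 fun z hz hz' => ?_
      apply hz.2
      simp only [Set.mem_iUnion, exists_prop]
      exact ⟨t', Finset.mem_erase.2 ⟨fun h => hne h.symm, Finset.mem_coe.1 ht'⟩, hz'.1.2⟩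
    have hsumH : ∑ t ∈ T', μ (H t) ≤ μ X := by
      rw [← measure_biUnion_finset hdisjH (fun t _ => hHm t)]
      calc μ (⋃ t ∈ T', H t) ≤ μ X' := by
            apply measure_mono
            simp only [Set.iUnion_subset_iff]
            exact fun t _ z hz => hz.1.1.2
      _ = μ X := measure_toMeasurable X
    calc (n₀ : ℝ≥0∞) * μ S = ∑ _t ∈ T', μ S := by
          rw [Finset.sum_const, hT'card, nsmul_eq_mul]
    _ ≤ ∑ t ∈ T', (μ (H t) + (n₀:ℝ≥0∞) * (μ X * ENNReal.ofReal (s' ^ α))) :=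
        Finset.sum_le_sum hper
    _ = ∑ t ∈ T', μ (H t) + (n₀:ℝ≥0∞) * ((n₀:ℝ≥0∞) * (μ X * ENNReal.ofReal (s' ^ α))) := by
        rw [Finset.sum_add_distrib, Finset.sum_const, hT'card, nsmul_eq_mul]
    _ ≤ μ X + (κ:ℝ≥0∞) := add_le_add hsumH herr
  calc ENNReal.ofReal (C * r ^ (-α)) * μ S ≤ (n₀ : ℝ≥0∞) * μ S := by
        gcongr
        calc ENNReal.ofReal (C * r ^ (-α)) ≤ ENNReal.ofReal (n₀:ℝ) :=
              ENNReal.ofReal_le_ofReal hn₀R.le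
        _ = (n₀ : ℝ≥0∞) := ENNReal.ofReal_natCast _
  _ ≤ μ X := hmain

lemma singleton_null (hg : 0 ≤ g) (hα : 0 < α) (hC : 1 < C) (hε₀ : 0 < ε₀)
    (hXtop : μH[g] X < ⊤)
    (hiso : ∀ ε : ℝ, 0 < ε → ∀ x ∈ X, ∀ y ∈ X,
      Nonempty ((X ∩ ball x ε : Set (EuclideanSpace ℝ (Fin d))) ≃ᵢ
                (X ∩ ball y ε : Set (EuclideanSpace ℝ (Fin d)))))
    (hpack : ∀ ε : ℝ, 0 < ε → ε < ε₀ →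
      ∃ T : Finset (EuclideanSpace ℝ (Fin d)), ↑T ⊆ X ∧
        (∀ x ∈ T, ∀ y ∈ T, x ≠ y → 2 * ε ≤ dist x y) ∧
        C * ε ^ (-α) < (T.card : ℝ))
    {x : EuclideanSpace ℝ (Fin d)} (hx : x ∈ X) : μH[g] {x} = 0 := by
  apply le_antisymm _ zero_le
  have hb : (0:ℝ≥0∞) < ⊤ := by simp
  have : ∀ κ : NNReal, 0 < κ → (0:ℝ≥0∞) < ⊤ → μH[g] {x} ≤ 0 + κ := by
    intro κ hκ _
    have hκ0 : (0:ℝ) < (κ:ℝ) := hκ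
    rw [zero_add]
    set MX := (μH[g] X).toReal with hMX
    have hMX0 : 0 ≤ MX := ENNReal.toReal_nonneg
    set rr : ℝ := min (ε₀/2) (((κ:ℝ)/(MX+1)) ^ α⁻¹) with hrr
    have hrr0 : 0 < rr := lt_min (by linarith) (by positivity)
    have hrrε₀ : rr < ε₀ := lt_of_le_of_lt (min_le_left _ _) (by linarith)
    have hpow : rr ^ α ≤ (κ:ℝ)/(MX+1) := by
      have h1a : ((((κ:ℝ)/(MX+1))) ^ α⁻¹) ^ α = (κ:ℝ)/(MX+1) := by
        rw [← Real.rpow_mul (by positivity), inv_mul_cancel₀ (ne_of_gt hα), Real.rpow_one]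
      rw [← h1a]
      exact Real.rpow_le_rpow hrr0.le (min_le_right _ _) hα.le
    calc μH[g] {x} ≤ μH[g] (X ∩ ball x rr) := by
          apply measure_mono
          intro z hz
          rw [Set.mem_singleton_iff] at hz
          subst hz
          exact ⟨hx, mem_ball_self hrr0⟩
    _ ≤ μH[g] X * ENNReal.ofReal (rr ^ α) := mball hg hα.le hC hXtop hiso hpack hrr0 hrrε₀ hx
    _ ≤ ENNReal.ofReal MX * ENNReal.ofReal (rr ^ α) := by
          gcongr
          exact le_of_eq (ENNReal.ofReal_toReal hXtop.ne).symm
    _ = ENNReal.ofReal (MX * rr ^ α) := (ENNReal.ofReal_mul hMX0).symm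
    _ ≤ ENNReal.ofReal (κ:ℝ) := by
          apply ENNReal.ofReal_le_ofReal
          calc MX * rr ^ α ≤ MX * ((κ:ℝ)/(MX+1)) := by
                apply mul_le_mul_of_nonneg_left hpow hMX0
          _ ≤ (κ:ℝ) := by
                rw [mul_div_assoc']
                rw [div_le_iff₀ (by linarith)]
                nlinarith
    _ = (κ:ℝ≥0∞) := ENNReal.ofReal_coe_nnreal
  have := ENNReal.le_of_forall_pos_le_add this
  simpa using this

end main

theorem stmt0 (d : ℕ) (hd : 1 ≤ d) (X : Set (EuclideanSpace ℝ (Fin d)))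
    (g α C ε₀ : ℝ) (hg : 0 ≤ g) (hα : 0 ≤ α) (hC : 1 < C) (hε₀ : 0 < ε₀) (hε₀1 : ε₀ < 1)
    (hX0 : 0 < μH[g] X) (hXtop : μH[g] X < ⊤)
    (hiso : ∀ ε : ℝ, 0 < ε → ∀ x ∈ X, ∀ y ∈ X,
      Nonempty ((X ∩ ball x ε : Set (EuclideanSpace ℝ (Fin d))) ≃ᵢ
                (X ∩ ball y ε : Set (EuclideanSpace ℝ (Fin d)))))
    (hpack : ∀ ε : ℝ, 0 < ε → ε < ε₀ →
      ∃ T : Finset (EuclideanSpace ℝ (Fin d)), ↑T ⊆ X ∧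
        (∀ x ∈ T, ∀ y ∈ T, x ≠ y → 2 * ε ≤ dist x y) ∧
        C * ε ^ (-α) < (T.card : ℝ))
    (E : Set (EuclideanSpace ℝ (Fin d))) (hE : E ⊆ X) (hEborel : MeasurableSet E)
    (θ : ℕ → Set (EuclideanSpace ℝ (Fin d))) (hcover : E ⊆ ⋃ j, θ j)
    (hdiam : ∀ j, EMetric.diam (θ j) ≤ ENNReal.ofReal ε₀) :
    ENNReal.ofReal C * (μH[g] E / μH[g] X) ≤ ∑' j, EMetric.diam (θ j) ^ α := by
  classical
  by_cases hα0 : α = 0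
  · subst hα0
    have hrw : ∀ j : ℕ, EMetric.diam (θ j) ^ (0:ℝ) = 1 := fun j => ENNReal.rpow_zero
    calc ENNReal.ofReal C * (μH[g] E / μH[g] X) ≤ ⊤ := le_top
    _ = ∑' _j : ℕ, (1:ℝ≥0∞) := (ENNReal.tsum_const_eq_top_of_ne_zero one_ne_zero).symm
    _ = ∑' j, EMetric.diam (θ j) ^ (0:ℝ) := tsum_congr fun j => (hrw j).symm
  have hαpos : 0 < α := lt_of_le_of_ne hα (Ne.symm hα0)
  have hpiece : ∀ j, ENNReal.ofReal C * μH[g] (E ∩ θ j) ≤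
      μH[g] X * (EMetric.diam (θ j)) ^ α := by
    intro j
    have hDle := hdiam j
    have hDne : EMetric.diam (θ j) ≠ ⊤ := ne_top_of_le_ne_top ENNReal.ofReal_ne_top hDle
    set dj : ℝ := (EMetric.diam (θ j)).toReal with hdj
    have hdj0 : 0 ≤ dj := ENNReal.toReal_nonneg
    have hdjD : EMetric.diam (θ j) = ENNReal.ofReal dj := by
      rw [hdj, ENNReal.ofReal_toReal hDne]
    have hdjε₀ : dj ≤ ε₀ := ENNReal.toReal_le_of_le_ofReal hε₀.le hDle
    have hsub : E ∩ θ j ⊆ X := fun z hz => hE hz.1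
    have hsd : EMetric.diam (E ∩ θ j) ≤ ENNReal.ofReal dj := by
      rw [← hdjD]; exact EMetric.diam_mono Set.inter_subset_right
    rcases eq_or_lt_of_le hdj0 with hdj00 | hdjpos
    · have hzero : μH[g] (E ∩ θ j) = 0 := by
        rcases (E ∩ θ j).eq_empty_or_nonempty with hemp | ⟨x, hxm⟩
        · rw [hemp]; exact measure_empty
        · have hsing : E ∩ θ j ⊆ {x} := by
            have hss : (E ∩ θ j).Subsingleton := by
              apply EMetric.diam_eq_zero_iff.mp
              apply le_antisymm _ zero_le
              calc EMetric.diam (E ∩ θ j) ≤ ENNReal.ofReal dj := hsd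
              _ = 0 := by rw [← hdj00]; simp
            intro z hz
            rw [Set.mem_singleton_iff]
            exact hss hz hxm
          apply le_antisymm _ zero_le
          calc μH[g] (E ∩ θ j) ≤ μH[g] {x} := measure_mono hsing
          _ = 0 := singleton_null hg hαpos hC hε₀ hXtop hiso hpack (hE hxm.1)
      rw [hzero, mul_zero]
      exact zero_le
    · have hk := key_lemma hg hαpos hC hε₀1 hXtop hiso hpack hdjpos hdjε₀ hsub hsd
      have hone : dj ^ α * dj ^ (-α) = 1 := by
        rw [← Real.rpow_add hdjpos]
        rw [show α + (-α) = 0 from by ring, Real.rpow_zero]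
      calc ENNReal.ofReal C * μH[g] (E ∩ θ j)
          = ENNReal.ofReal (dj ^ α) * (ENNReal.ofReal (C * dj ^ (-α)) * μH[g] (E ∩ θ j)) := by
            rw [← mul_assoc, ← ENNReal.ofReal_mul (by positivity)]
            rw [show dj ^ α * (C * dj ^ (-α)) = C * (dj ^ α * dj ^ (-α)) from by ring, hone,
              mul_one]
      _ ≤ ENNReal.ofReal (dj ^ α) * μH[g] X := _root_.mul_le_mul_right hk _
      _ = μH[g] X * (EMetric.diam (θ j)) ^ α := by
            rw [hdjD, ENNReal.ofReal_rpow_of_pos hdjpos, mul_comm]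
  have hsum : ENNReal.ofReal C * μH[g] E ≤ μH[g] X * ∑' j, EMetric.diam (θ j) ^ α := by
    calc ENNReal.ofReal C * μH[g] E ≤ ENNReal.ofReal C * ∑' j, μH[g] (E ∩ θ j) := by
          gcongr
          calc μH[g] E ≤ μH[g] (⋃ j, E ∩ θ j) := by
                apply measure_mono
                intro z hz
                obtain ⟨j, hj⟩ := Set.mem_iUnion.mp (hcover hz)
                exact Set.mem_iUnion.mpr ⟨j, hz, hj⟩
          _ ≤ ∑' j, μH[g] (E ∩ θ j) := measure_iUnion_le _
    _ = ∑' j, ENNReal.ofReal C * μH[g] (E ∩ θ j) := ENNReal.tsum_mul_left.symm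
    _ ≤ ∑' j, μH[g] X * EMetric.diam (θ j) ^ α := ENNReal.tsum_le_tsum hpiece
    _ = μH[g] X * ∑' j, EMetric.diam (θ j) ^ α := ENNReal.tsum_mul_left
  have hX0' : μH[g] X ≠ 0 := hX0.ne'
  have hXt' : μH[g] X ≠ ⊤ := hXtop.ne
  calc ENNReal.ofReal C * (μH[g] E / μH[g] X) = ENNReal.ofReal C * μH[g] E / μH[g] X := by
        rw [mul_div_assoc]
  _ ≤ μH[g] X * (∑' j, EMetric.diam (θ j) ^ α) / μH[g] X := ENNReal.div_le_div_right hsum _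
  _ = ∑' j, EMetric.diam (θ j) ^ α := by
        rw [mul_comm, mul_div_assoc, ENNReal.div_self hX0' hXt', mul_one]
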